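/- arXiv:2112.11995 — 4 statements merged into one kernel-verified Lean document; each statement's English description precedes it below -/
import Mathlib

section
/- Let 𝕂 be a field of characteristic different from 2, M a 𝕂-vector space, α, β : M → M commuting linear maps, and f : M × M → M a bilinear map satisfying f(β(a), α(b)) = −f(β(b), α(a)) for all a, b ∈ M. Then (M, f, α, β) is a BiHom-Lie algebra if and only if [f, f] = 0. -/
/- Basic notions for BiHom-Lie algebras. -/

section Core

variable {K : Type*} [Field K]
variable {M : Type*} [AddCommGroup M] [Module K M]

/-- The trilinear operation `f∘g` associated to two bilinear maps `f g` and
twisting maps `α β`: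
`(f∘g)(a,b,c) = f(β²(a), g(β(b), α(c))) + f(β²(b), g(β(c), α(a))) + f(β²(c), g(β(a), α(b)))`. -/
def bhCirc (α β : M →ₗ[K] M) (f g : M →ₗ[K] M →ₗ[K] M) (a b c : M) : M :=
  f (β (β a)) (g (β b) (α c)) + f (β (β b)) (g (β c) (α a)) + f (β (β c)) (g (β a) (α b))

/-- The bracket `[f,g] = f∘g + g∘f` of bilinear maps. -/
def bhBrk (α β : M →ₗ[K] M) (f g : M →ₗ[K] M →ₗ[K] M) (a b c : M) : M :=
  bhCirc α β f g a b c + bhCirc α β g f a b c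

/-- `(M, d, α, β)` is a BiHom-Lie algebra: `α∘β = β∘α`, BiHom-skew-symmetry and
the BiHom-Jacobi condition. -/
def IsBiHomLie (d : M →ₗ[K] M →ₗ[K] M) (α β : M →ₗ[K] M) : Prop :=
  (∀ m, α (β m) = β (α m)) ∧
  (∀ x y, d (β x) (α y) = - d (β y) (α x)) ∧
  (∀ x y z,
    d (β (β x)) (d (β y) (α z)) + d (β (β y)) (d (β z) (α x)) +
      d (β (β z)) (d (β x) (α y)) = 0)

/-- Multiplicativity: `α` and `β` are algebra morphisms for the bracket `d`. -/
def IsMultiplicative (d : M →ₗ[K] M →ₗ[K] M) (α β : M →ₗ[K] M) : Prop :=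
  (∀ x y, α (d x y) = d (α x) (α y)) ∧ (∀ x y, β (d x y) = d (β x) (β y))

end Core

section Morph

variable {K : Type*} [Field K]
variable {M : Type*} [AddCommGroup M] [Module K M]
variable {N : Type*} [AddCommGroup N] [Module K N]

/-- A morphism of BiHom-Lie algebras. -/
def IsBHMorphism (d : M →ₗ[K] M →ₗ[K] M) (α β : M →ₗ[K] M)
    (d' : N →ₗ[K] N →ₗ[K] N) (α' β' : N →ₗ[K] N) (f : M →ₗ[K] N) : Prop :=
  (∀ m, f (α m) = α' (f m)) ∧ (∀ m, f (β m) = β' (f m)) ∧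
  (∀ m n, f (d m n) = d' (f m) (f n))

end Morph

section RepCo

variable {K : Type*} [Field K]
variable {L : Type*} [AddCommGroup L] [Module K L]
variable {V : Type*} [AddCommGroup V] [Module K V]

/-- A representation of the BiHom-Lie algebra `(L, δ, α, β)` on `(V, αV, βV)` given by a
left action `lam_l` and a right action `lam_r`. -/
def IsBHRep (δ : L →ₗ[K] L →ₗ[K] L) (α β : L →ₗ[K] L) (αV βV : V →ₗ[K] V)
    (lam_l : L →ₗ[K] V →ₗ[K] V) (lam_r : V →ₗ[K] L →ₗ[K] V) : Prop :=
  (∀ (v : V) (y : L), lam_r (βV v) (α y) = - lam_l (β y) (αV v)) ∧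
  (∀ (x y : L) (v : V),
    lam_r (βV (βV v)) (δ (β x) (α y)) =
      lam_l (β (β x)) (lam_r (βV v) (α y)) + lam_l (β (β y)) (lam_r (βV v) (α x)))

/-- A `2`-cocycle of `(L, δ, α, β)` with values in `V`, relative to the left action `lam_l`. -/
def IsBH2Cocycle (δ : L →ₗ[K] L →ₗ[K] L) (α β : L →ₗ[K] L)
    (lam_l : L →ₗ[K] V →ₗ[K] V) (θ : L →ₗ[K] L →ₗ[K] V) : Prop :=
  (∀ x y, θ (β x) (α y) = - θ (β y) (α x)) ∧
  (∀ x y z,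
    θ (β (β x)) (δ (β y) (α z)) - θ (β (β y)) (δ (β x) (α z)) +
      θ (β (β z)) (δ (β x) (α y)) +
      lam_l (β (β x)) (θ (β y) (α z)) - lam_l (β (β y)) (θ (β x) (α z)) +
      lam_l (β (β z)) (θ (β x) (α y)) = 0)

/-- A `1`-cochain: a linear map commuting with the structure maps. -/
def IsBH1Cochain (α β : L →ₗ[K] L) (αV βV : V →ₗ[K] V) (h : L →ₗ[K] V) : Prop :=
  (∀ x, h (α x) = αV (h x)) ∧ (∀ x, h (β x) = βV (h x))

/-- The `1`-coboundary operator: `D₁(h)(x,y) = -h(δ(x,y)) + λ_l(x, h(y)) + λ_r(h(x), y)`. -/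
def bhD1 (δ : L →ₗ[K] L →ₗ[K] L) (lam_l : L →ₗ[K] V →ₗ[K] V)
    (lam_r : V →ₗ[K] L →ₗ[K] V) (h : L →ₗ[K] V) : L →ₗ[K] L →ₗ[K] V :=
  LinearMap.mk₂ K (fun x y => - h (δ x y) + lam_l x (h y) + lam_r (h x) y)
    (by intro m₁ m₂ n; simp [map_add]; abel)
    (by intro c m n; simp [map_smul, smul_add, smul_neg])
    (by intro m n₁ n₂; simp [map_add]; abel)
    (by intro c m n; simp [map_smul, smul_add, smul_neg])

/-- The bilinear map on `L ⊕ V` determined by data `δ, λ_l, λ_r, θ, μ`: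
`d(x+v, y+w) = δ(x,y) + θ(x,y) + λ_l(x,w) + λ_r(v,y) + μ(v,w)`. -/
def bhStd (δ : L →ₗ[K] L →ₗ[K] L) (lam_l : L →ₗ[K] V →ₗ[K] V)
    (lam_r : V →ₗ[K] L →ₗ[K] V) (θ : L →ₗ[K] L →ₗ[K] V) (μ : V →ₗ[K] V →ₗ[K] V) :
    (L × V) →ₗ[K] (L × V) →ₗ[K] (L × V) :=
  LinearMap.mk₂ K
    (fun p q => (δ p.1 q.1, θ p.1 q.1 + lam_l p.1 q.2 + lam_r p.2 q.1 + μ p.2 q.2))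
    (by intro m₁ m₂ n; simp [Prod.ext_iff, map_add]; abel)
    (by intro c m n; simp [Prod.ext_iff, map_smul, smul_add])
    (by intro m n₁ n₂; simp [Prod.ext_iff, map_add]; abel)
    (by intro c m n; simp [Prod.ext_iff, map_smul, smul_add])

end RepCo

section Ext

variable {K : Type*} [Field K]
variable {V : Type*} [AddCommGroup V] [Module K V]
variable {M : Type*} [AddCommGroup M] [Module K M]
variable {L : Type*} [AddCommGroup L] [Module K L]

/-- `0 → (V,μ,αV,βV) →ⁱ (M,d,αM,βM) →^π (L,δ,α,β) → 0` is an extension of BiHom-Lie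
algebras: all three are BiHom-Lie algebras, `i, π` are morphisms, `i` injective,
`π` surjective, and `Im i = ker π`. -/
def IsBHExtension (μ : V →ₗ[K] V →ₗ[K] V) (αV βV : V →ₗ[K] V)
    (d : M →ₗ[K] M →ₗ[K] M) (αM βM : M →ₗ[K] M)
    (δ : L →ₗ[K] L →ₗ[K] L) (α β : L →ₗ[K] L)
    (i : V →ₗ[K] M) (π : M →ₗ[K] L) : Prop :=
  IsBiHomLie μ αV βV ∧ IsBiHomLie d αM βM ∧ IsBiHomLie δ α β ∧
  IsBHMorphism μ αV βV d αM βM i ∧ IsBHMorphism d αM βM δ α β π ∧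
  Function.Injective i ∧ Function.Surjective π ∧ LinearMap.range i = LinearMap.ker π

/-- The extension is split: there is a BiHom-subalgebra of `M` complementary to `ker π`. -/
def IsBHSplit (d : M →ₗ[K] M →ₗ[K] M) (αM βM : M →ₗ[K] M) (π : M →ₗ[K] L) : Prop :=
  ∃ S : Submodule K M, (∀ m ∈ S, αM m ∈ S) ∧ (∀ m ∈ S, βM m ∈ S) ∧
    (∀ m ∈ S, ∀ n ∈ S, d m n ∈ S) ∧ IsCompl S (LinearMap.ker π)

end Ext

/-- Over a field of characteristic ≠ 2, if `α, β` commute and the bilinear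
map `f` satisfies `f(β(a), α(b)) = -f(β(b), α(a))`, then `(M, f, α, β)` is a BiHom-Lie
algebra if and only if `[f, f] = 0`. -/
theorem stmt0 {K : Type*} [Field K] (h2 : (2 : K) ≠ 0)
    {M : Type*} [AddCommGroup M] [Module K M]
    (α β : M →ₗ[K] M) (f : M →ₗ[K] M →ₗ[K] M)
    (hcomm : ∀ m, α (β m) = β (α m))
    (hskew : ∀ a b, f (β a) (α b) = - f (β b) (α a)) :
    IsBiHomLie f α β ↔ ∀ a b c, bhBrk α β f f a b c = 0 := by
  have key : ∀ a b c, bhBrk α β f f a b c = (2:K) • (f (β (β a)) (f (β b) (α c)) + f (β (β b)) (f (β c) (α a)) + f (β (β c)) (f (β a) (α b))) := by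
    intro a b c
    simp only [bhBrk, bhCirc, two_smul]
  constructor
  · rintro ⟨-, -, hjac⟩ a b c
    rw [key, hjac, smul_zero]
  · intro h
    refine ⟨hcomm, hskew, fun a b c => ?_⟩
    have := h a b c
    rw [key] at this
    exact (smul_eq_zero.mp this).resolve_left h2
end

section
/- Let (L, δ, α, β) be a multiplicative BiHom-Lie algebra, (V, λ_l, λ_r, α_V, β_V) a representation of L on V, and h : L → V a 1-cochain. Then D₁(h) is skew-symmetric in the BiHom sense: D₁(h)(β(x), α(y)) = −D₁(h)(β(y), α(x)) for all x, y ∈ L. -/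
/-- For a multiplicative BiHom-Lie algebra `(L, δ, α, β)`, a representation
`(V, λ_l, λ_r, αV, βV)` and a `1`-cochain `h : L → V`, the coboundary `D₁(h)` is
skew-symmetric in the BiHom sense: `D₁(h)(β(x), α(y)) = -D₁(h)(β(y), α(x))`. -/
theorem stmt7 {K : Type*} [Field K]
    {L : Type*} [AddCommGroup L] [Module K L]
    {V : Type*} [AddCommGroup V] [Module K V]
    (δ : L →ₗ[K] L →ₗ[K] L) (α β : L →ₗ[K] L)
    (hL : IsBiHomLie δ α β) (hLmul : IsMultiplicative δ α β)
    (αV βV : V →ₗ[K] V) (hVcomm : ∀ v, αV (βV v) = βV (αV v))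
    (lam_l : L →ₗ[K] V →ₗ[K] V) (lam_r : V →ₗ[K] L →ₗ[K] V)
    (hrep : IsBHRep δ α β αV βV lam_l lam_r)
    (h : L →ₗ[K] V) (hh : IsBH1Cochain α β αV βV h) :
    ∀ x y : L,
      bhD1 δ lam_l lam_r h (β x) (α y) = - bhD1 δ lam_l lam_r h (β y) (α x) := by
  intro x y
  obtain ⟨hc, hskew, hjac⟩ := hL
  obtain ⟨hrep1, hrep2⟩ := hrep
  obtain ⟨hhα, hhβ⟩ := hh
  simp only [bhD1, LinearMap.mk₂_apply]
  rw [hskew x y, hhα, hhβ, hhα, hhβ, hrep1, hrep1]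
  simp only [map_neg]
  abel
end

section
/- Let Φ be an equivalence (over isomorphisms s : L → L' and φ : V → V') between two standard split abelian extensions with data d = δ + θ + λ_l + λ_r on L ⊕ V and d' = δ' + θ' + λ_l' + λ_r' on L' ⊕ V', and write Φ(x) = s₁(x) + i₁(x), Φ(v) = i₂(v), where s₁ : L → L' is bijective. Define h : L' → V' by h(s₁(x)) = i₁(x). Then i₂(θ(x, y)) = θ'(s₁(x), s₁(y)) + D₁(h)(s₁(x), s₁(y)) for all x, y ∈ L; consequently the bilinear map (x', y') ↦ i₂(θ(s₁⁻¹(x'), s₁⁻¹(y'))) is a 2-cocycle of L' on V' whose class in Z²(L', V', λ')/B²(L', V') equals the class of θ'. -/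
/-- Let `Φ` be an equivalence (over `s : L → L'` and `φ : V → V'`) between
two standard split abelian extensions, write `Φ(x) = s₁(x) + i₁(x)`, `Φ(v) = i₂(v)`, with
`s₁` bijective, and define `h : L' → V'` by `h(s₁(x)) = i₁(x)`. Then
`i₂(θ(x,y)) = θ'(s₁(x), s₁(y)) + D₁(h)(s₁(x), s₁(y))`; consequently the bilinear map
`(x', y') ↦ i₂(θ(s₁⁻¹(x'), s₁⁻¹(y')))` is a `2`-cocycle of `L'` on `V'` whose cohomology
class equals the class of `θ'`. -/
theorem stmt10 {K : Type*} [Field K]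
    {L : Type*} [AddCommGroup L] [Module K L]
    {V : Type*} [AddCommGroup V] [Module K V]
    {L' : Type*} [AddCommGroup L'] [Module K L']
    {V' : Type*} [AddCommGroup V'] [Module K V']
    -- unprimed standard split abelian extension data
    (δ : L →ₗ[K] L →ₗ[K] L) (α β : L →ₗ[K] L) (hL : IsBiHomLie δ α β)
    (αV βV : V →ₗ[K] V)
    (lam_l : L →ₗ[K] V →ₗ[K] V) (lam_r : V →ₗ[K] L →ₗ[K] V)
    (hrep : IsBHRep δ α β αV βV lam_l lam_r)
    (θ : L →ₗ[K] L →ₗ[K] V) (hθ : IsBH2Cocycle δ α β lam_l θ)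
    -- primed standard split abelian extension data
    (δ' : L' →ₗ[K] L' →ₗ[K] L') (α' β' : L' →ₗ[K] L') (hL' : IsBiHomLie δ' α' β')
    (αV' βV' : V' →ₗ[K] V')
    (lam_l' : L' →ₗ[K] V' →ₗ[K] V') (lam_r' : V' →ₗ[K] L' →ₗ[K] V')
    (hrep' : IsBHRep δ' α' β' αV' βV' lam_l' lam_r')
    (θ' : L' →ₗ[K] L' →ₗ[K] V') (hθ' : IsBH2Cocycle δ' α' β' lam_l' θ')
    -- the equivalence (Φ, s, φ)
    (Φ : (L × V) ≃ₗ[K] (L' × V'))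
    (hΦ : IsBHMorphism (bhStd δ lam_l lam_r θ 0)
      (LinearMap.prodMap α αV) (LinearMap.prodMap β βV)
      (bhStd δ' lam_l' lam_r' θ' 0)
      (LinearMap.prodMap α' αV') (LinearMap.prodMap β' βV')
      (Φ : (L × V) →ₗ[K] (L' × V')))
    (s : L ≃ₗ[K] L') (hs : IsBHMorphism δ α β δ' α' β' (s : L →ₗ[K] L'))
    (φ : V ≃ₗ[K] V')
    (hφα : ∀ v, φ (αV v) = αV' (φ v)) (hφβ : ∀ v, φ (βV v) = βV' (φ v))
    (hΦi : ∀ v : V, Φ (0, v) = (0, φ v))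
    (hΦπ : ∀ p : L × V, (Φ p).1 = s p.1)
    -- `s₁ : L → L'`, `x ↦ (Φ(x,0)).1`, is bijective
    (hs₁ : Function.Bijective fun x : L => (Φ (x, 0)).1) :
    -- `h : L' → V'` is (uniquely) determined by `h(s₁(x)) = i₁(x)`
    ∃ hmap : L' →ₗ[K] V',
      (∀ x : L, hmap ((Φ (x, 0)).1) = (Φ (x, 0)).2) ∧
      -- i₂(θ(x,y)) = θ'(s₁(x), s₁(y)) + D₁(h)(s₁(x), s₁(y))
      (∀ x y : L,
        (Φ (0, θ x y)).2 =
          θ' ((Φ (x, 0)).1) ((Φ (y, 0)).1) +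
            bhD1 δ' lam_l' lam_r' hmap ((Φ (x, 0)).1) ((Φ (y, 0)).1)) ∧
      -- the transported cocycle and its cohomology class
      ∃ θt : L' →ₗ[K] L' →ₗ[K] V',
        (∀ x' y' : L', θt x' y' = (Φ (0, θ (s.symm x') (s.symm y'))).2) ∧
        IsBH2Cocycle δ' α' β' lam_l' θt ∧
        ∃ k : L' →ₗ[K] V', IsBH1Cochain α' β' αV' βV' k ∧
          ∀ x' y' : L', θt x' y' = θ' x' y' + bhD1 δ' lam_l' lam_r' k x' y' := by

  classical
  -- the section map h
  set hmap : L' →ₗ[K] V' :=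
    (LinearMap.snd K L' V') ∘ₗ (Φ : (L × V) →ₗ[K] (L' × V')) ∘ₗ
      (LinearMap.inl K L V) ∘ₗ (s.symm : L' →ₗ[K] L) with hmap_def
  have hmap_apply : ∀ x' : L', hmap x' = (Φ (s.symm x', 0)).2 := by
    intro x'; simp [hmap_def]
  have hmap_s : ∀ x : L, hmap (s x) = (Φ (x, 0)).2 := by
    intro x; rw [hmap_apply, s.symm_apply_apply]
  -- transport of twisting maps along s
  have hsα : ∀ a : L', s.symm (α' a) = α (s.symm a) := by
    intro a
    have h := hs.1 (s.symm a)
    simp only [LinearEquiv.coe_coe, LinearEquiv.apply_symm_apply] at h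
    rw [← h]; exact s.symm_apply_apply _
  have hsβ : ∀ a : L', s.symm (β' a) = β (s.symm a) := by
    intro a
    have h := hs.2.1 (s.symm a)
    simp only [LinearEquiv.coe_coe, LinearEquiv.apply_symm_apply] at h
    rw [← h]; exact s.symm_apply_apply _
  have hsδ : ∀ a b : L', s.symm (δ' a b) = δ (s.symm a) (s.symm b) := by
    intro a b
    have h := hs.2.2 (s.symm a) (s.symm b)
    simp only [LinearEquiv.coe_coe, LinearEquiv.apply_symm_apply] at h
    rw [← h]; exact s.symm_apply_apply _
  -- splitting of Φ
  have hsplit : ∀ (a : L) (v : V), Φ (a, v) = Φ (a, 0) + (0, φ v) := by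
    intro a v
    rw [← hΦi, ← map_add]
    congr 1
    simp
  have hsnd : ∀ (a : L) (v : V), (Φ (a, v)).2 = (Φ (a, 0)).2 + φ v := by
    intro a v; rw [hsplit]; simp
  -- key identity from the morphism condition
  have key : ∀ x y : L,
      φ (θ x y) = θ' (s x) (s y) +
        (-(hmap (δ' (s x) (s y))) + lam_l' (s x) (hmap (s y)) +
          lam_r' (hmap (s x)) (s y)) := by
    intro x y
    have E := hΦ.2.2 (x, 0) (y, 0)
    simp only [bhStd, LinearMap.mk₂_apply, map_zero, LinearMap.zero_apply,
      add_zero, zero_add, LinearEquiv.coe_coe] at E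
    have E2 := congrArg Prod.snd E
    rw [hsnd, hΦπ (x,0), hΦπ (y,0), ← hmap_s x, ← hmap_s y] at E2
    have hδ : (Φ (δ x y, 0)).2 = hmap (δ' (s x) (s y)) := by
      have h := hs.2.2 x y
      simp only [LinearEquiv.coe_coe] at h
      rw [← h, hmap_s]
    rw [hδ] at E2
    simp only at E2
    -- E2 : hmap (δ' (s x) (s y)) + φ (θ x y) = θ' (s x) (s y) + lam_l' ... + lam_r' ...
    have := E2
    linear_combination (norm := abel) this
  -- transport of the left action
  have hlam : ∀ (x : L) (w : V), φ (lam_l x w) = lam_l' (s x) (φ w) := by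
    intro x w
    have E := hΦ.2.2 (x, 0) (0, w)
    simp only [bhStd, LinearMap.mk₂_apply, map_zero, LinearMap.zero_apply,
      add_zero, zero_add, LinearEquiv.coe_coe] at E
    rw [hΦi, hsplit 0 w, hΦi, hΦπ (x,0)] at E
    have E2 := congrArg Prod.snd E
    simp only [map_zero, Prod.snd_add, LinearMap.zero_apply, add_zero, zero_add] at E2
    rw [← hmap_s x] at E2
    simpa using E2
  -- hmap is a 1-cochain
  have hcochain : IsBH1Cochain α' β' αV' βV' hmap := by
    constructor
    · intro x'
      have E := congrArg Prod.snd (hΦ.1 (s.symm x', 0))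
      simp only [LinearMap.prodMap_apply, map_zero, Prod.map_fst, Prod.map_snd] at E
      rw [hmap_apply, hsα]
      rw [hmap_apply x']
      calc (Φ (α (s.symm x'), 0)).2 = (Φ (α (s.symm x'), αV 0)).2 := by rw [map_zero]
        _ = αV' ((Φ (s.symm x', 0)).2) := by
            have := hΦ.1 (s.symm x', 0)
            simp only [LinearMap.prodMap_apply] at this
            rw [show ((α (s.symm x'), αV 0) : L × V) = (α (s.symm x'), αV 0) from rfl]
            have : Φ (α (s.symm x'), αV 0) = (α' (Φ (s.symm x', 0)).1, αV' (Φ (s.symm x', 0)).2) := by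
              have h2 := hΦ.1 (s.symm x', 0)
              simpa [Prod.map, LinearEquiv.coe_coe] using h2
            rw [this]
    · intro x'
      rw [hmap_apply, hsβ, hmap_apply x']
      calc (Φ (β (s.symm x'), 0)).2 = (Φ (β (s.symm x'), βV 0)).2 := by rw [map_zero]
        _ = βV' ((Φ (s.symm x', 0)).2) := by
            have : Φ (β (s.symm x'), βV 0) = (β' (Φ (s.symm x', 0)).1, βV' (Φ (s.symm x', 0)).2) := by
              have h2 := hΦ.2.1 (s.symm x', 0)
              simpa [Prod.map, LinearEquiv.coe_coe] using h2
            rw [this]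
  refine ⟨hmap, ?_, ?_, ?_⟩
  · intro x; rw [hΦπ (x,0)]; exact hmap_s x
  · intro x y
    rw [hΦi, hΦπ (x,0), hΦπ (y,0)]
    simpa only [bhD1, LinearMap.mk₂_apply] using key x y
  · -- the transported cocycle
    set θt : L' →ₗ[K] L' →ₗ[K] V' := LinearMap.mk₂ K
      (fun x' y' => φ (θ (s.symm x') (s.symm y')))
      (by intro a b c; simp [map_add])
      (by intro c a b; simp [map_smul])
      (by intro a b c; simp [map_add])
      (by intro c a b; simp [map_smul]) with θt_def
    have θt_apply : ∀ a b : L', θt a b = φ (θ (s.symm a) (s.symm b)) := by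
      intro a b; simp [θt_def]
    have keyt : ∀ a b : L', θt a b = θ' a b +
        (-(hmap (δ' a b)) + lam_l' a (hmap b) + lam_r' (hmap a) b) := by
      intro a b
      rw [θt_apply]
      have := key (s.symm a) (s.symm b)
      rwa [s.apply_symm_apply, s.apply_symm_apply] at this
    refine ⟨θt, ?_, ?_, hmap, hcochain, ?_⟩
    · intro x' y'; rw [hΦi, θt_apply]
    · constructor
      · intro x' y'
        rw [θt_apply, θt_apply, hsβ, hsα, hsβ, hsα, hθ.1, map_neg]
      · intro x' y' z'
        have e1 : ∀ a : L', s.symm (β' (β' a)) = β (β (s.symm a)) := by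
          intro a; rw [hsβ, hsβ]
        have e2 : ∀ a : L', β' (β' a) = s (β (β (s.symm a))) := by
          intro a; rw [← e1 a, s.apply_symm_apply]
        simp only [θt_apply, hsδ, hsβ, hsα, e1]
        rw [e2 x', e2 y', e2 z']
        simp only [← hlam]
        rw [← map_sub, ← map_add, ← map_add, ← map_sub, ← map_add]
        rw [hθ.2 (s.symm x') (s.symm y') (s.symm z'), map_zero]
    · intro x' y'
      rw [keyt]
      simp [bhD1]
end

section
/- Let (L, δ, α, β) be a multiplicative BiHom-Lie algebra, (V, λ_l, λ_r, α_V, β_V) a representation of L on V, and let θ and θ' be 2-cocycles of L on V with θ' = θ + D₁(h) for some 1-cochain h : L → V. Then the map Φ : L ⊕ V → L ⊕ V defined by Φ(x + v) = x − h(x) + v is an isomorphism of BiHom-Lie algebras from (L ⊕ V, d_θ, α + α_V, β + β_V) to (L ⊕ V, d_{θ'}, α + α_V, β + β_V), where d_θ(x + v, y + w) = δ(x, y) + θ(x, y) + λ_l(x, w) + λ_r(v, y) and similarly for d_{θ'}; together with the identity maps on V and L, Φ gives an equivalence of the standard split abelian extensions determined by θ and θ'. -/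
/-- If `θ' = θ + D₁(h)` for a `1`-cochain `h`, then
`Φ(x + v) = x - h(x) + v` is an isomorphism of BiHom-Lie algebras from
`(L ⊕ V, d_θ, α + αV, β + βV)` to `(L ⊕ V, d_{θ'}, α + αV, β + βV)`, and together with the
identity maps on `V` and `L` it gives an equivalence of the standard split abelian
extensions determined by `θ` and `θ'`. -/
theorem stmt11 {K : Type*} [Field K]
    {L : Type*} [AddCommGroup L] [Module K L]
    {V : Type*} [AddCommGroup V] [Module K V]
    (δ : L →ₗ[K] L →ₗ[K] L) (α β : L →ₗ[K] L)
    (hL : IsBiHomLie δ α β) (hLmul : IsMultiplicative δ α β)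
    (αV βV : V →ₗ[K] V)
    (lam_l : L →ₗ[K] V →ₗ[K] V) (lam_r : V →ₗ[K] L →ₗ[K] V)
    (hrep : IsBHRep δ α β αV βV lam_l lam_r)
    (θ θ' : L →ₗ[K] L →ₗ[K] V)
    (hθ : IsBH2Cocycle δ α β lam_l θ) (hθ' : IsBH2Cocycle δ α β lam_l θ')
    (h : L →ₗ[K] V) (hh : IsBH1Cochain α β αV βV h)
    (hθθ' : ∀ x y, θ' x y = θ x y + bhD1 δ lam_l lam_r h x y) :
    -- Φ(x + v) = x - h(x) + v, i.e. Φ(x, v) = (x, v - h(x))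
    Function.Bijective
      (LinearMap.prod (LinearMap.fst K L V)
        (LinearMap.snd K L V - h ∘ₗ LinearMap.fst K L V)) ∧
    IsBHMorphism (bhStd δ lam_l lam_r θ 0)
      (LinearMap.prodMap α αV) (LinearMap.prodMap β βV)
      (bhStd δ lam_l lam_r θ' 0)
      (LinearMap.prodMap α αV) (LinearMap.prodMap β βV)
      (LinearMap.prod (LinearMap.fst K L V)
        (LinearMap.snd K L V - h ∘ₗ LinearMap.fst K L V)) ∧
    -- Φ ∘ i₀ = i₀ ∘ id_V
    (∀ v : V,
      (LinearMap.prod (LinearMap.fst K L V)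
        (LinearMap.snd K L V - h ∘ₗ LinearMap.fst K L V)) (0, v) = (0, v)) ∧
    -- π₀ ∘ Φ = id_L ∘ π₀
    (∀ p : L × V,
      ((LinearMap.prod (LinearMap.fst K L V)
        (LinearMap.snd K L V - h ∘ₗ LinearMap.fst K L V)) p).1 = p.1) := by
  refine ⟨?_, ⟨?_, ?_, ?_⟩, ?_, ?_⟩
  · constructor
    · intro p q hpq
      simp only [LinearMap.prod_apply, Function.prod, LinearMap.sub_apply,
        LinearMap.fst_apply, LinearMap.snd_apply, LinearMap.comp_apply,
        Prod.mk.injEq] at hpq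
      obtain ⟨h1, h2⟩ := hpq
      ext
      · exact h1
      · rw [h1] at h2; exact sub_left_injective h2
    · intro q
      refine ⟨(q.1, q.2 + h q.1), ?_⟩
      simp
  · intro p
    simp [hh.1, Prod.ext_iff, map_sub]
  · intro p
    simp [hh.2, Prod.ext_iff, map_sub]
  · intro p q
    simp only [bhStd, LinearMap.prod_apply, Function.prod, LinearMap.sub_apply,
      LinearMap.fst_apply, LinearMap.snd_apply, LinearMap.comp_apply,
      LinearMap.mk₂_apply, hθθ', bhD1, LinearMap.zero_apply, Prod.mk.injEq]
    refine ⟨trivial, ?_⟩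
    simp only [map_sub, LinearMap.sub_apply]
    abel
  · intro v; simp
  · intro p; simp
end
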